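/- In any scheduling game with rank-based utilities on m identical machines with arbitrary positive processing times and arbitrary machine-dependent priority lists, every pure Nash equilibrium s satisfies C_max(s) ≤ (2 − 1/m)·OPT(G). -/
import Mathlib


open Finset
open scoped Classical

noncomputable section

variable {J M : Type*} [Fintype J]

/-- Completion time of job `j` in profile `s`: the total processing time of the jobs on
`j`'s machine that do not come after `j` in that machine's priority list, divided by the speed. -/
def Ctime (p : J → ℝ) (r : M → ℝ) (π : M → J → ℕ) (s : J → M) (j : J) : ℝ :=
  (∑ j' ∈ univ.filter (fun j' => s j' = s j ∧ π (s j) j' ≤ π (s j) j), p j') / r (s j)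

/-- Rank of job `j` in profile `s`. -/
def rankOf (p : J → ℝ) (r : M → ℝ) (π : M → J → ℕ) (s : J → M) (j : J) : ℝ :=
  ((univ.filter (fun j' => Ctime p r π s j' < Ctime p r π s j)).card : ℝ) +
    (((univ.filter (fun j' => Ctime p r π s j' = Ctime p r π s j)).card : ℝ) + 1) / 2

/-- The unilateral deviation of job `j` to machine `i` is beneficial. -/
def Beneficial (p : J → ℝ) (r : M → ℝ) (π : M → J → ℕ) (s : J → M) (j : J) (i : M) : Prop :=
  rankOf p r π (Function.update s j i) j < rankOf p r π s j ∨
    (rankOf p r π (Function.update s j i) j = rankOf p r π s j ∧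
      Ctime p r π (Function.update s j i) j < Ctime p r π s j)

/-- Pure Nash equilibrium: no job has a beneficial deviation. -/
def IsNE (p : J → ℝ) (r : M → ℝ) (π : M → J → ℕ) (s : J → M) : Prop :=
  ∀ j i, ¬ Beneficial p r π s j i

/-- Makespan of profile `s`. -/
def Cmax (p : J → ℝ) (r : M → ℝ) (π : M → J → ℕ) (s : J → M) : ℝ :=
  ⨆ j, Ctime p r π s j

section Helpers

variable (p : J → ℝ) (π : M → J → ℕ)

/-- Completion time on unit-speed machines as a sum. -/
lemma Ctime_one (s : J → M) (j : J) :
    Ctime p (fun _ => (1:ℝ)) π s j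
      = ∑ j' ∈ univ.filter (fun j' => s j' = s j ∧ π (s j) j' ≤ π (s j) j), p j' := by
  simp [Ctime]

lemma Ctime_lt_of_later (hp : ∀ j, 0 < p j) (s : J → M)
    {j j' : J} (hsame : s j' = s j) (hlt : π (s j) j < π (s j) j') :
    Ctime p (fun _ => (1:ℝ)) π s j < Ctime p (fun _ => (1:ℝ)) π s j' := by
  rw [Ctime_one, Ctime_one, hsame]
  refine Finset.sum_lt_sum_of_subset ?_ (i := j') ?_ ?_ (hp j') ?_
  · intro k hk
    simp only [mem_filter, mem_univ, true_and] at hk ⊢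
    exact ⟨hk.1, le_trans hk.2 hlt.le⟩
  · simp [hsame]
  · simp only [mem_filter, mem_univ, true_and, not_and, not_le]
    intro _; exact hlt
  · intro k _ _; exact (hp k).le

lemma pj_le_Ctime (hp : ∀ j, 0 < p j) (s : J → M) (j : J) :
    p j ≤ Ctime p (fun _ => (1:ℝ)) π s j := by
  rw [Ctime_one]
  refine Finset.single_le_sum (fun k _ => (hp k).le) ?_
  simp

lemma Ctime_pos (hp : ∀ j, 0 < p j) (s : J → M) (j : J) :
    0 < Ctime p (fun _ => (1:ℝ)) π s j :=
  lt_of_lt_of_le (hp j) (pj_le_Ctime p π hp s j)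

end Helpers

/-- PoA upper bound on identical machines: every NE has makespan at most
`(2 - 1/m)` times the optimal makespan. -/
theorem PoA_identical {J : Type*} [Fintype J] [Nonempty J] (m : ℕ) (hm : 1 ≤ m)
    (p : J → ℝ) (hp : ∀ j, 0 < p j)
    (π : Fin m → J → ℕ) (hπ : ∀ i, Function.Injective (π i))
    (s : J → Fin m) (hNE : IsNE p (fun _ => (1:ℝ)) π s) (t : J → Fin m) :
    Cmax p (fun _ => (1:ℝ)) π s ≤ (2 - 1 / (m : ℝ)) * Cmax p (fun _ => (1:ℝ)) π t := by
  classical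
  set r : Fin m → ℝ := fun _ => (1:ℝ) with hr
  set C : J → ℝ := Ctime p r π s with hC
  set Ct : J → ℝ := Ctime p r π t with hCt
  -- the load of machine i
  set load : (J → Fin m) → Fin m → ℝ :=
    fun u i => ∑ j ∈ univ.filter (fun j => u j = i), p j with hload
  set T : ℝ := Cmax p r π t with hT
  -- basic facts about T
  have hbdd : BddAbove (Set.range Ct) := Set.Finite.bddAbove (Set.finite_range _)
  have hCtT : ∀ j, Ct j ≤ T := fun j => le_ciSup hbdd j
  have hpT : ∀ j, p j ≤ T := fun j => le_trans (pj_le_Ctime p π hp t j) (hCtT j)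
  have hT0 : 0 < T := lt_of_lt_of_le (hp (Classical.arbitrary J)) (hpT _)
  -- every machine load under t is at most T
  have hloadT : ∀ i, load t i ≤ T := by
    intro i
    by_cases hne : (univ.filter (fun j => t j = i)).Nonempty
    · obtain ⟨k, hk, hkmax⟩ := Finset.exists_max_image _ (π i) hne
      simp only [mem_filter, mem_univ, true_and] at hk
      have : load t i = Ct k := by
        rw [hCt, Ctime_one, hload]
        refine Finset.sum_congr ?_ (fun _ _ => rfl)
        ext j'
        simp only [mem_filter, mem_univ, true_and, hk]
        constructor
        · intro h
          exact ⟨h, hkmax j' (by simp [h])⟩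
        · exact fun h => h.1
      rw [this]; exact hCtT k
    · have : load t i = 0 := by
        rw [hload]
        rw [Finset.not_nonempty_iff_eq_empty] at hne
        simp [hne]
      rw [this]; exact hT0.le
  -- total processing time
  have hsum : ∀ u : J → Fin m, ∑ i, load u i = ∑ j, p j := by
    intro u
    rw [hload]
    exact Finset.sum_fiberwise univ u p
  have hsumT : ∑ j, p j ≤ (m : ℝ) * T := by
    rw [← hsum t]
    calc ∑ i, load t i ≤ ∑ _i : Fin m, T := Finset.sum_le_sum (fun i _ => hloadT i)
    _ = (m : ℝ) * T := by simp [mul_comm]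
  -- pick the job with maximal completion time in s
  obtain ⟨jm, -, hjm⟩ := Finset.exists_max_image (univ : Finset J) C univ_nonempty
  have hjm' : ∀ j, C j ≤ C jm := fun j => hjm j (mem_univ j)
  set a : Fin m := s jm with ha
  -- jm is the last job on its machine
  have hlast : ∀ k, s k = a → π a k ≤ π a jm := by
    intro k hk
    by_contra hlt
    push_neg at hlt
    have := Ctime_lt_of_later p π hp s (j := jm) (j' := k) hk hlt
    exact absurd (hjm' k) (not_le.mpr this)
  have hlast' : ∀ k, k ≠ jm → s k = a → π a k < π a jm := by
    intro k hk hka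
    rcases lt_or_eq_of_le (hlast k hka) with h | h
    · exact h
    · exact absurd (hπ a h) hk
  -- C jm equals the load of machine a
  have hCjm : C jm = load s a := by
    rw [hC, Ctime_one, hload]
    refine Finset.sum_congr ?_ (fun _ _ => rfl)
    ext k
    simp only [mem_filter, mem_univ, true_and, ← ha]
    exact ⟨fun h => h.1, fun h => ⟨h, hlast k h⟩⟩
  -- key NE consequence: for every machine i, C jm ≤ Ctime of jm after deviating to i
  have hkey : ∀ i : Fin m, C jm ≤ Ctime p r π (Function.update s jm i) jm := by
    intro i
    by_contra hcon
    push_neg at hcon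
    set s' : J → Fin m := Function.update s jm i with hs'
    set C' : J → ℝ := Ctime p r π s' with hC'
    -- completion times of other jobs do not decrease
    have hmono : ∀ k, k ≠ jm → C k ≤ C' k := by
      intro k hk
      have hsk : s' k = s k := Function.update_of_ne hk i s
      rw [hC, hC', Ctime_one, Ctime_one, hsk]
      refine Finset.sum_le_sum_of_subset_of_nonneg ?_ (fun j' _ _ => (hp j').le)
      intro x hx
      simp only [mem_filter, mem_univ, true_and] at hx ⊢
      have hxne : x ≠ jm := by
        intro hxjm
        subst hxjm
        rcases hx with ⟨hx1, hx2⟩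
        have hska : s k = a := by rw [← hx1, ha]
        have := hlast' k hk hska
        rw [hska] at hx2
        exact absurd hx2 (not_le.mpr this)
      rw [hs', Function.update_of_ne hxne i s]
      exact hx
    -- rank comparison sets
    set A : Finset J := univ.filter (fun k => C k < C jm) with hA
    set B : Finset J := univ.filter (fun k => C k = C jm) with hB
    set A' : Finset J := univ.filter (fun k => C' k < C' jm) with hA'
    set B' : Finset J := univ.filter (fun k => C' k = C' jm) with hB'
    have hjmB : jm ∈ B := by simp [hB]
    have hjmB' : jm ∈ B' := by simp [hB']
    have hsub : A' ∪ B'.erase jm ⊆ A := by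
      intro k hk
      simp only [mem_union, mem_erase, mem_filter, mem_univ, true_and, hA', hB'] at hk
      simp only [hA, mem_filter, mem_univ, true_and]
      rcases hk with h | ⟨hkne, h⟩
      · have hkne : k ≠ jm := by
          intro he; subst he; exact lt_irrefl _ h
        calc C k ≤ C' k := hmono k hkne
        _ < C' jm := h
        _ < C jm := hcon
      · calc C k ≤ C' k := hmono k hkne
        _ = C' jm := h
        _ < C jm := hcon
    have hdisj : Disjoint A' (B'.erase jm) := by
      rw [Finset.disjoint_left]
      intro k hk1 hk2
      simp only [hA', mem_filter, mem_univ, true_and] at hk1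
      simp only [mem_erase, hB', mem_filter, mem_univ, true_and] at hk2
      rw [hk2.2] at hk1; exact lt_irrefl _ hk1
    have hcard : A'.card + (B'.erase jm).card ≤ A.card := by
      rw [← Finset.card_union_of_disjoint hdisj]
      exact Finset.card_le_card hsub
    have hB'card : (B'.erase jm).card + 1 = B'.card := Finset.card_erase_add_one hjmB'
    have hBcard : 1 ≤ B.card := Finset.card_pos.mpr ⟨jm, hjmB⟩
    -- beneficial deviation, contradiction with NE
    have hrank : rankOf p r π s' jm ≤ rankOf p r π s jm := by
      have e1 : rankOf p r π s' jm = (A'.card : ℝ) + ((B'.card : ℝ) + 1) / 2 := by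
        rw [rankOf]
      have e2 : rankOf p r π s jm = (A.card : ℝ) + ((B.card : ℝ) + 1) / 2 := by
        rw [rankOf]
      rw [e1, e2]
      have h1 : (1 : ℝ) ≤ (B'.card : ℝ) := by
        exact_mod_cast Finset.card_pos.mpr ⟨jm, hjmB'⟩
      have h2 : (1 : ℝ) ≤ (B.card : ℝ) := by exact_mod_cast hBcard
      have h3 : (A'.card : ℝ) + ((B'.erase jm).card : ℝ) ≤ (A.card : ℝ) := by
        exact_mod_cast hcard
      have h4 : ((B'.erase jm).card : ℝ) + 1 = (B'.card : ℝ) := by exact_mod_cast hB'card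
      linarith
    have hben : Beneficial p r π s jm i := by
      rcases lt_or_eq_of_le hrank with h | h
      · exact Or.inl h
      · exact Or.inr ⟨h, hcon⟩
    exact hNE jm i hben
  -- hence every machine's load is at least C jm - p jm
  have hloadlb : ∀ i : Fin m, C jm - p jm ≤ load s i := by
    intro i
    by_cases hia : i = a
    · subst hia
      rw [← hCjm]
      linarith [hp jm]
    · have h1 := hkey i
      have h2 : Ctime p r π (Function.update s jm i) jm ≤ load s i + p jm := by
        rw [Ctime_one, hload]
        have hjmnot : jm ∉ univ.filter (fun j => s j = i) := by
          simp only [mem_filter, mem_univ, true_and]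
          rw [← ha]; exact fun h => hia h.symm
        refine le_trans (Finset.sum_le_sum_of_subset_of_nonneg
          (t := insert jm (univ.filter (fun j => s j = i))) ?_ (fun j' _ _ => (hp j').le)) ?_
        · intro k hk
          simp only [mem_filter, mem_univ, true_and, Function.update_self] at hk
          by_cases hkjm : k = jm
          · simp [hkjm]
          · rw [Function.update_of_ne hkjm i s] at hk
            simp [hk.1]
        · rw [Finset.sum_insert hjmnot]
          exact le_of_eq (by ring)
      linarith
  -- sum the load bounds
  have hsumload : C jm + ((m : ℝ) - 1) * (C jm - p jm) ≤ ∑ j, p j := by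
    rw [← hsum s]
    have hmem : a ∈ (univ : Finset (Fin m)) := mem_univ a
    rw [← Finset.add_sum_erase _ _ hmem]
    have h1 : ((univ : Finset (Fin m)).erase a).card • (C jm - p jm)
        ≤ ∑ i ∈ (univ : Finset (Fin m)).erase a, load s i :=
      Finset.card_nsmul_le_sum _ _ _ (fun i _ => hloadlb i)
    have hcard : ((univ : Finset (Fin m)).erase a).card = m - 1 := by
      rw [Finset.card_erase_of_mem hmem, Finset.card_univ, Fintype.card_fin]
    rw [hcard] at h1
    have hcast : ((m - 1 : ℕ) : ℝ) = (m : ℝ) - 1 := by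
      rw [Nat.cast_sub hm, Nat.cast_one]
    rw [nsmul_eq_mul, hcast] at h1
    have h2 : C jm ≤ load s a := le_of_eq hCjm
    linarith
  -- combine
  have hmR : (1 : ℝ) ≤ (m : ℝ) := by exact_mod_cast hm
  have hm0 : (0 : ℝ) < (m : ℝ) := by linarith
  have hfin : C jm ≤ (2 - 1 / (m : ℝ)) * T := by
    have h1 : (m : ℝ) * C jm ≤ (m : ℝ) * T + ((m : ℝ) - 1) * p jm := by
      nlinarith [hsumT, hsumload]
    have h2 : ((m : ℝ) - 1) * p jm ≤ ((m : ℝ) - 1) * T :=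
      mul_le_mul_of_nonneg_left (hpT jm) (by linarith)
    have h3 : (m : ℝ) * C jm ≤ (2 * (m : ℝ) - 1) * T := by linarith
    have heq : (2 - 1 / (m : ℝ)) * T = ((2 * (m : ℝ) - 1) * T) / (m : ℝ) := by
      field_simp
    rw [heq, le_div_iff₀ hm0]
    linarith [h3]
  have hCmax : Cmax p r π s ≤ C jm := by
    apply ciSup_le
    intro j
    exact hjm' j
  calc Cmax p r π s ≤ C jm := hCmax
    _ ≤ (2 - 1 / (m : ℝ)) * T := hfin
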